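/- arXiv:1010.3263 — 3 statements merged into one kernel-verified Lean document; each statement's English description precedes it below -/
import Mathlib

section
/- If 1 ≤ n ≤ 3 and L is a left ideal or a suffix-closed regular language over a finite alphabet Σ with quotient complexity κ(L) = n, then σ(L) ≤ n^{n-1} + n - 1 (i.e., σ(L) ≤ 1 for n = 1, σ(L) ≤ 3 for n = 2, and σ(L) ≤ 11 for n = 3). -/
/-- The left quotient of a language `L` by a word `w`: `{x | w ++ x ∈ L}`. -/
def leftQ {α : Type*} (L : Set (List α)) (w : List α) : Set (List α) :=
  {x | w ++ x ∈ L}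

/-- Quotient (state) complexity: the number of distinct left quotients of `L`. -/
noncomputable def quotCompl {α : Type*} (L : Set (List α)) : ℕ :=
  Nat.card (Set.range (leftQ L))

/-- The syntactic (Myhill) congruence of `L`. -/
def synRel {α : Type*} (L : Set (List α)) (x y : List α) : Prop :=
  ∀ u v : List α, u ++ x ++ v ∈ L ↔ u ++ y ++ v ∈ L

/-- The syntactic setoid on the free semigroup of non-empty words. -/
def synSetoid {α : Type*} (L : Set (List α)) : Setoid {w : List α // w ≠ []} :=
  ⟨fun x y => synRel L x.1 y.1,
   ⟨fun _ _ _ => Iff.rfl, fun h u v => (h u v).symm,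
    fun h₁ h₂ u v => (h₁ u v).trans (h₂ u v)⟩⟩

/-- Syntactic complexity: the cardinality of the syntactic semigroup of `L`. -/
noncomputable def synCompl {α : Type*} (L : Set (List α)) : ℕ :=
  Nat.card (Quotient (synSetoid L))

/-- `L` is a right ideal: it is non-empty and `L = LΣ*`. -/
def IsRightIdeal {α : Type*} (L : Set (List α)) : Prop :=
  L.Nonempty ∧ L = {x | ∃ u ∈ L, ∃ v : List α, x = u ++ v}

/-- `L` is a left ideal: it is non-empty and `L = Σ*L`. -/
def IsLeftIdeal {α : Type*} (L : Set (List α)) : Prop :=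
  L.Nonempty ∧ L = {x | ∃ u : List α, ∃ v ∈ L, x = u ++ v}

/-- `L` is a two-sided ideal: it is non-empty and `L = Σ*LΣ*`. -/
def IsTwoSidedIdeal {α : Type*} (L : Set (List α)) : Prop :=
  L.Nonempty ∧ L = {x | ∃ u : List α, ∃ w ∈ L, ∃ v : List α, x = u ++ w ++ v}

/-- The reverse of a language. -/
def langReverse {α : Type*} (L : Set (List α)) : Set (List α) :=
  List.reverse '' L

/-- A DFA is minimal: every state is reachable from the start state, and no two
distinct states accept the same set of words. -/
def DFAMinimal {α σ : Type*} (M : DFA α σ) : Prop :=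
  (∀ q : σ, ∃ w : List α, M.evalFrom M.start w = q) ∧
  ∀ p q : σ, (∀ w : List α, M.evalFrom p w ∈ M.accept ↔ M.evalFrom q w ∈ M.accept) → p = q

lemma exists_two {P : Type*} [Fintype P] [DecidableEq P] (q0 : P)
    (h : Fintype.card P = 2) : ∃ a, a ≠ q0 ∧ ∀ x, x = q0 ∨ x = a := by
  have hs : (Finset.univ.erase q0).card = 1 := by
    rw [Finset.card_erase_of_mem (Finset.mem_univ _), Finset.card_univ, h]
  obtain ⟨a, ha⟩ := Finset.card_eq_one.mp hs
  refine ⟨a, ?_, ?_⟩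
  · have : a ∈ Finset.univ.erase q0 := by rw [ha]; exact Finset.mem_singleton_self a
    exact (Finset.mem_erase.mp this).1
  · intro x
    by_cases hx : x = q0
    · exact Or.inl hx
    · have : x ∈ Finset.univ.erase q0 := Finset.mem_erase.mpr ⟨hx, Finset.mem_univ _⟩
      rw [ha, Finset.mem_singleton] at this
      exact Or.inr this

lemma exists_three {P : Type*} [Fintype P] [DecidableEq P] (q0 : P)
    (h : Fintype.card P = 3) : ∃ a b, a ≠ q0 ∧ b ≠ q0 ∧ a ≠ b ∧ ∀ x, x = q0 ∨ x = a ∨ x = b := by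
  have hs : (Finset.univ.erase q0).card = 2 := by
    rw [Finset.card_erase_of_mem (Finset.mem_univ _), Finset.card_univ, h]
  obtain ⟨a, b, hab, hs2⟩ := Finset.card_eq_two.mp hs
  have haq : a ≠ q0 := by
    have : a ∈ Finset.univ.erase q0 := by rw [hs2]; exact Finset.mem_insert_self a _
    exact (Finset.mem_erase.mp this).1
  have hbq : b ≠ q0 := by
    have : b ∈ Finset.univ.erase q0 := by
      rw [hs2]; exact Finset.mem_insert_of_mem (Finset.mem_singleton_self b)
    exact (Finset.mem_erase.mp this).1
  refine ⟨a, b, haq, hbq, hab, fun x => ?_⟩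
  by_cases hx : x = q0
  · exact Or.inl hx
  · have : x ∈ Finset.univ.erase q0 := Finset.mem_erase.mpr ⟨hx, Finset.mem_univ _⟩
    rw [hs2, Finset.mem_insert, Finset.mem_singleton] at this
    exact Or.inr this


lemma card_mono_le_of_encode {P : Type*} [PartialOrder P] [Finite P] {k m : ℕ}
    (r : Fin k → Fin k → Prop) [DecidableRel r]
    (e : P → Fin k) (e' : Fin k → P)
    (h1 : ∀ x, e' (e x) = x) (h2 : ∀ i, e (e' i) = i)
    (hrel : ∀ x y, x ≤ y ↔ r (e x) (e y))
    (hm : Fintype.card {g : Fin k → Fin k // ∀ i j, r i j → r (g i) (g j)} ≤ m) :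
    Nat.card {f : P → P // Monotone f} ≤ m := by
  have einj : Function.Injective e := Function.LeftInverse.injective h1
  have key : Nat.card {f : P → P // Monotone f}
      ≤ Nat.card {g : Fin k → Fin k // ∀ i j, r i j → r (g i) (g j)} := by
    refine Nat.card_le_card_of_injective
      (fun f => ⟨fun i => e (f.1 (e' i)), fun i j hij => ?_⟩) ?_
    · rw [← hrel]
      exact f.2 ((hrel (e' i) (e' j)).mpr (by rwa [h2, h2]))
    · intro f g h
      apply Subtype.ext; funext x
      have := congrFun (congrArg Subtype.val h) (e x)
      simp only [h1] at this
      exact einj this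
  calc Nat.card {f : P → P // Monotone f} ≤ _ := key
    _ = Fintype.card {g : Fin k → Fin k // ∀ i j, r i j → r (g i) (g j)} :=
        Nat.card_eq_fintype_card
    _ ≤ m := hm

lemma count_chain3 : Fintype.card {g : Fin 3 → Fin 3 // ∀ i j : Fin 3, i ≤ j → g i ≤ g j} ≤ 11 := by decide
lemma count_chain2 : Fintype.card {g : Fin 2 → Fin 2 // ∀ i j : Fin 2, i ≤ j → g i ≤ g j} ≤ 3 := by decide
lemma count_V3 : Fintype.card {g : Fin 3 → Fin 3 // ∀ i j : Fin 3, (i = j ∨ i = 0) → (g i = g j ∨ g i = 0)} ≤ 11 := by decide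

lemma key3chain {P : Type*} [PartialOrder P] [Finite P] (q0 a b : P)
    (hq0 : ∀ x, q0 ≤ x) (ha : a ≠ q0) (hb : b ≠ q0) (hab : a ≠ b)
    (hall : ∀ w, w = q0 ∨ w = a ∨ w = b) (hle : a ≤ b) :
    Nat.card {f : P → P // Monotone f} ≤ 11 := by
  classical
  have hnaq : ¬ a ≤ q0 := fun h => ha (le_antisymm h (hq0 a))
  have hnbq : ¬ b ≤ q0 := fun h => hb (le_antisymm h (hq0 b))
  have hnba : ¬ b ≤ a := fun h => hab (le_antisymm hle h)
  refine card_mono_le_of_encode (fun i j : Fin 3 => i ≤ j)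
    (fun z => if z = q0 then 0 else if z = a then 1 else 2) ![q0, a, b]
    ?_ ?_ ?_ count_chain3
  · intro x
    rcases hall x with rfl | rfl | rfl
    · simp
    · simp [ha]
    · simp [hb, hab.symm]
  · intro i
    fin_cases i <;> simp [ha, hb, hab.symm]
  · intro x y
    rcases hall x with rfl | rfl | rfl <;> rcases hall y with rfl | rfl | rfl <;>
      simp [ha, hb, hab.symm, hq0 _, hnaq, hnbq, hnba, hle, Fin.le_def]

lemma key3 {P : Type*} [PartialOrder P] [Finite P] (q0 a b : P)
    (hq0 : ∀ x, q0 ≤ x) (ha : a ≠ q0) (hb : b ≠ q0) (hab : a ≠ b)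
    (hall : ∀ w, w = q0 ∨ w = a ∨ w = b) :
    Nat.card {f : P → P // Monotone f} ≤ 11 := by
  classical
  rcases em (a ≤ b) with hle | hnab
  · exact key3chain q0 a b hq0 ha hb hab hall hle
  rcases em (b ≤ a) with hle | hnba
  · exact key3chain q0 b a hq0 hb ha hab.symm (fun w => by rcases hall w with h|h|h <;> tauto) hle
  have hnaq : ¬ a ≤ q0 := fun h => hnab (le_trans h (hq0 b))
  have hnbq : ¬ b ≤ q0 := fun h => hnba (le_trans h (hq0 a))
  refine card_mono_le_of_encode (fun i j : Fin 3 => i = j ∨ i = 0)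
    (fun z => if z = q0 then 0 else if z = a then 1 else 2) ![q0, a, b]
    ?_ ?_ ?_ count_V3
  · intro x
    rcases hall x with rfl | rfl | rfl
    · simp
    · simp [ha]
    · simp [hb, hab.symm]
  · intro i
    fin_cases i <;> simp [ha, hb, hab.symm]
  · intro x y
    rcases hall x with rfl | rfl | rfl <;> rcases hall y with rfl | rfl | rfl <;>
      simp [ha, hb, hab.symm, hq0 _, hnaq, hnbq, hnba, hnab]

lemma key2 {P : Type*} [PartialOrder P] [Finite P] (q0 a : P)
    (hq0 : ∀ x, q0 ≤ x) (ha : a ≠ q0) (hall : ∀ w, w = q0 ∨ w = a) :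
    Nat.card {f : P → P // Monotone f} ≤ 3 := by
  classical
  have hnaq : ¬ a ≤ q0 := fun h => ha (le_antisymm h (hq0 a))
  refine card_mono_le_of_encode (fun i j : Fin 2 => i ≤ j)
    (fun z => if z = q0 then 0 else 1) ![q0, a] ?_ ?_ ?_ count_chain2
  · intro x
    rcases hall x with rfl | rfl
    · simp
    · simp [ha]
  · intro i
    fin_cases i <;> simp [ha]
  · intro x y
    rcases hall x with rfl | rfl <;> rcases hall y with rfl | rfl <;>
      simp [ha, hq0 _, hnaq, Fin.le_def]

lemma key_bot {P : Type*} [PartialOrder P] [Finite P] (q0 : P) (hq0 : ∀ x, q0 ≤ x)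
    (n : ℕ) (hn1 : 1 ≤ n) (hn3 : n ≤ 3) (hc : Nat.card P = n) :
    Nat.card {f : P → P // Monotone f} ≤ n ^ (n - 1) + n - 1 := by
  classical
  letI : Fintype P := Fintype.ofFinite P
  interval_cases n
  · have h0 : Nat.card {f : P → P // Monotone f} ≤ Nat.card (P → P) :=
      Nat.card_le_card_of_injective Subtype.val Subtype.val_injective
    have h2 : Nat.card (P → P) = 1 := by rw [Nat.card_fun, hc]; norm_num
    omega
  · obtain ⟨a, ha, hall⟩ := exists_two q0 (by rw [← Nat.card_eq_fintype_card]; exact hc)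
    have := key2 q0 a hq0 ha hall
    omega
  · obtain ⟨a, b, ha, hb, hab, hall⟩ :=
      exists_three q0 (by rw [← Nat.card_eq_fintype_card]; exact hc)
    have := key3 q0 a b hq0 ha hb hab hall
    simpa using this

lemma key_both {P : Type*} [PartialOrder P] [Finite P] (q0 : P)
    (hq0 : (∀ x, q0 ≤ x) ∨ (∀ x, x ≤ q0))
    (n : ℕ) (hn1 : 1 ≤ n) (hn3 : n ≤ 3) (hc : Nat.card P = n) :
    Nat.card {f : P → P // Monotone f} ≤ n ^ (n - 1) + n - 1 := by
  rcases hq0 with h | h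
  · exact key_bot q0 h n hn1 hn3 hc
  · have e : {f : P → P // Monotone f} ≃ {f : Pᵒᵈ → Pᵒᵈ // Monotone f} :=
      ⟨fun f => ⟨f.1, f.2.dual⟩, fun f => ⟨f.1, f.2.dual⟩, fun f => rfl, fun f => rfl⟩
    rw [Nat.card_congr e]
    exact key_bot (P := Pᵒᵈ) (OrderDual.toDual q0) (fun x => h x) n hn1 hn3
      (by rw [← hc]; exact Nat.card_congr OrderDual.ofDual)

lemma leftQ_leftQ {α : Type*} (L : Set (List α)) (u w : List α) :
    leftQ (leftQ L u) w = leftQ L (u ++ w) := by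
  ext x; simp [leftQ, List.append_assoc]

def mapQ {α : Type*} (L : Set (List α)) (w : List α) :
    ↥(Set.range (leftQ L)) → ↥(Set.range (leftQ L)) :=
  fun S => ⟨leftQ S.1 w, by
    obtain ⟨u, hu⟩ := S.2
    exact ⟨u ++ w, by rw [← leftQ_leftQ, hu]⟩⟩

lemma mapQ_mono {α : Type*} (L : Set (List α)) (w : List α) : Monotone (mapQ L w) :=
  fun _ _ h _ hx => h hx

lemma mapQ_apply {α : Type*} (L : Set (List α)) (w u : List α) (h) :
    (mapQ L w ⟨leftQ L u, h⟩).1 = leftQ L (u ++ w) := by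
  show leftQ (leftQ L u) w = _
  exact leftQ_leftQ L u w

noncomputable def synToMono {α : Type*} (L : Set (List α)) :
    Quotient (synSetoid L) →
      {f : ↥(Set.range (leftQ L)) → ↥(Set.range (leftQ L)) // Monotone f} :=
  Quotient.lift (fun w => ⟨mapQ L w.1, mapQ_mono L w.1⟩) (by
    rintro ⟨w, hw⟩ ⟨w', hw'⟩ h
    apply Subtype.ext
    funext S
    apply Subtype.ext
    obtain ⟨u, hu⟩ := S.2
    show leftQ S.1 w = leftQ S.1 w'
    rw [← hu, leftQ_leftQ, leftQ_leftQ]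
    ext v
    simp only [leftQ, Set.mem_setOf_eq, List.append_assoc]
    simpa using h u v)

lemma synToMono_inj {α : Type*} (L : Set (List α)) : Function.Injective (synToMono L) := by
  intro x y
  induction x using Quotient.ind with | _ w => ?_
  induction y using Quotient.ind with | _ w' => ?_
  intro h
  refine Quotient.sound (fun u v => ?_)
  have h2 := congrArg (fun f => (f.1 ⟨leftQ L u, ⟨u, rfl⟩⟩).1) h
  simp only [synToMono, Quotient.lift_mk, mapQ_apply] at h2
  have := Set.ext_iff.mp h2 v
  have h4 : u ++ (w.1 ++ v) ∈ L ↔ u ++ (w'.1 ++ v) ∈ L := this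
  simpa only [List.append_assoc] using h4

/-- If `1 ≤ n ≤ 3` and `L` is a left ideal or a suffix-closed
regular language with quotient complexity `n`, then `σ(L) ≤ n^{n-1} + n - 1`. -/
theorem stmt_16 {α : Type*} [Fintype α] (L : Set (List α))
    (hreg : (Set.range (leftQ L)).Finite) (n : ℕ) (hn1 : 1 ≤ n) (hn3 : n ≤ 3)
    (hn : quotCompl L = n)
    (hL : IsLeftIdeal L ∨ ∀ w ∈ L, ∀ v : List α, v <:+ w → v ∈ L) :
    synCompl L ≤ n ^ (n - 1) + n - 1 := by
  classical
  haveI : Finite ↥(Set.range (leftQ L)) := hreg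
  have hLmem : L ∈ Set.range (leftQ L) := ⟨[], by ext x; simp [leftQ]⟩
  set q0 : ↥(Set.range (leftQ L)) := ⟨L, hLmem⟩ with hq0def
  have hcomp : (∀ S, q0 ≤ S) ∨ (∀ S, S ≤ q0) := by
    rcases hL with ⟨hne, hid⟩ | hsuf
    · left
      rintro ⟨S, u, rfl⟩ x hx
      show u ++ x ∈ L
      rw [hid]
      exact ⟨u, x, hx, rfl⟩
    · right
      rintro ⟨S, u, rfl⟩ x hx
      exact hsuf _ hx x ⟨u, rfl⟩
  have hinj : Nat.card (Quotient (synSetoid L))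
      ≤ Nat.card {f : ↥(Set.range (leftQ L)) → ↥(Set.range (leftQ L)) // Monotone f} :=
    Nat.card_le_card_of_injective _ (synToMono_inj L)
  exact le_trans hinj (key_both q0 hcomp n hn1 hn3 hn)
end

section
/- For every n ≥ 3 there exists a left ideal L over a four-letter alphabet with quotient complexity κ(L) = n whose reverse L^R has quotient complexity exactly 2^{n-1} + 1; such a witness is the language accepted by the DFA with states {0,1,…,n-1}, initial state 0, final state set a non-empty subset of {1,…,n-1}, and letters a = the cycle (1,2,…,n-1) fixing 0, c mapping n-1 to 1 and fixing all other states, d mapping n-1 to 0 and fixing all other states, and e mapping every state to 1. -/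
/-- The transition function of the automaton of Theorem 5 restricted to the
letters `{a, c, d, e}`: `a = (1,2,…,n-1)` fixing `0`, `c : n-1 ↦ 1`,
`d : n-1 ↦ 0`, and `e` maps every state to `1`. -/
def step17 (n : ℕ) (hn : 3 ≤ n) : Fin n → Fin 4 → Fin n := fun q l =>
  if l.val = 0 then -- a : the cycle (1, 2, …, n-1), fixing 0
    if q.val = 0 then q
    else if _h : q.val = n - 1 then ⟨1, by omega⟩
    else ⟨q.val + 1, by have := q.isLt; omega⟩
  else if l.val = 1 then -- c : n-1 ↦ 1, fixing all other states
    if q.val = n - 1 then ⟨1, by omega⟩ else q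
  else if l.val = 2 then -- d : n-1 ↦ 0, fixing all other states
    if q.val = n - 1 then ⟨0, by omega⟩ else q
  else -- e : the constant transformation sending every state to 1
    ⟨1, by omega⟩

namespace S17
variable (n : ℕ) (hn : 3 ≤ n)

abbrev af : Fin n → Fin n := fun q => step17 n hn q ⟨0, by omega⟩

variable {n}

lemma mod_succ (x m : ℕ) (hm : 2 ≤ m) : (x % m + 1) % m = (x + 1) % m := by
  conv_rhs => rw [Nat.add_mod]
  rw [Nat.mod_eq_of_lt (show 1 < m by omega)]

lemma af_zero {q : Fin n} (h : q.val = 0) : af n hn q = q := by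
  simp [af, step17, h]

lemma af_val {q : Fin n} (h : q.val ≠ 0) : (af n hn q).val = q.val % (n-1) + 1 := by
  have hq := q.isLt
  simp only [af, step17]
  rw [if_pos trivial, if_neg h]
  split
  · rename_i h2; simp [h2, Nat.mod_self]
  · rename_i h2; simp [Nat.mod_eq_of_lt (by omega : q.val < n - 1)]

lemma afk_zero {q : Fin n} (h : q.val = 0) (k : ℕ) : (af n hn)^[k] q = q := by
  induction k with
  | zero => rfl
  | succ k ih => rw [Function.iterate_succ_apply', ih, af_zero hn h]

lemma afk_val {q : Fin n} (h : q.val ≠ 0) (k : ℕ) :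
    ((af n hn)^[k] q).val = (q.val - 1 + k) % (n-1) + 1 := by
  have hq := q.isLt
  induction k with
  | zero => simp [Nat.mod_eq_of_lt (by omega : q.val - 1 < n - 1)]; omega
  | succ k ih =>
    rw [Function.iterate_succ_apply', af_val hn (by omega : ((af n hn)^[k] q).val ≠ 0), ih]
    rw [← Nat.add_assoc, mod_succ _ _ (by omega)]

end S17

namespace S17
variable {n : ℕ} (hn : 3 ≤ n)

lemma afk_ne_zero {q : Fin n} (h : q.val ≠ 0) (k : ℕ) : ((af n hn)^[k] q).val ≠ 0 := by
  rw [afk_val hn h]; omega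

lemma afm (q : Fin n) : (af n hn)^[n-1] q = q := by
  by_cases h : q.val = 0
  · exact afk_zero hn h _
  · have hq := q.isLt
    apply Fin.ext
    rw [afk_val hn h, Nat.add_mod_right,
      Nat.mod_eq_of_lt (by omega : q.val - 1 < n - 1)]
    omega

lemma afk_inj (s : ℕ) : Function.Injective ((af n hn)^[s]) := by
  intro p q h
  by_cases hp : p.val = 0 <;> by_cases hq : q.val = 0
  · exact Fin.ext (by omega)
  · exfalso; rw [afk_zero hn hp] at h
    exact afk_ne_zero hn hq s (by rw [← h]; omega)
  · exfalso; rw [afk_zero hn hq] at h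
    exact afk_ne_zero hn hp s (by rw [h]; omega)
  · have := afk_val hn hp s
    rw [h, afk_val hn hq s] at this
    have hp' := p.isLt; have hq' := q.isLt
    have h' : (q.val - 1 + s) % (n-1) = (p.val - 1 + s) % (n-1) := Nat.add_right_cancel this
    have h2 : (p.val - 1) % (n-1) = (q.val - 1) % (n-1) :=
      (Nat.ModEq.add_right_cancel' s h'.symm)
    apply Fin.ext
    rw [Nat.mod_eq_of_lt (by omega : p.val - 1 < n-1),
        Nat.mod_eq_of_lt (by omega : q.val - 1 < n-1)] at h2
    omega

end S17

namespace S17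
variable (n : ℕ) (hn : 3 ≤ n) (F : Set (Fin n))

def Mq : DFA (Fin 4) (Fin n) :=
  { step := step17 n hn, start := ⟨0, by omega⟩, accept := F }

variable {n F}

lemma evalFrom_cons (q : Fin n) (l : Fin 4) (w : List (Fin 4)) :
    (Mq n hn F).evalFrom q (l :: w) = (Mq n hn F).evalFrom (step17 n hn q l) w := rfl

lemma step_a (q : Fin n) : step17 n hn q ⟨0, by omega⟩ = af n hn q := rfl

lemma step_e (q : Fin n) : step17 n hn q ⟨3, by omega⟩ = ⟨1, by omega⟩ := by
  simp [step17]

lemma step_e' {l : Fin 4} (hl : l.val = 3) (q : Fin n) :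
    step17 n hn q l = ⟨1, by omega⟩ := by
  simp [step17, hl]

lemma step_c (q : Fin n) :
    step17 n hn q ⟨1, by omega⟩ = if q.val = n - 1 then (⟨1, by omega⟩ : Fin n) else q := by
  simp [step17]

lemma step_d (q : Fin n) :
    step17 n hn q ⟨2, by omega⟩ = if q.val = n - 1 then (⟨0, by omega⟩ : Fin n) else q := by
  simp [step17]

lemma eval_rep (q : Fin n) (k : ℕ) :
    (Mq n hn F).evalFrom q (List.replicate k ⟨0, by omega⟩) = (af n hn)^[k] q := by
  induction k generalizing q with
  | zero => rfl
  | succ k ih =>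
    rw [List.replicate_succ, evalFrom_cons, ih, step_a, ← Function.iterate_succ_apply]

lemma mem_accepts' (w : List (Fin 4)) :
    w ∈ (Mq n hn F).accepts ↔ (Mq n hn F).evalFrom ⟨0, by omega⟩ w ∈ F := Iff.rfl

/-- every state is reachable -/
lemma reachable (q : Fin n) :
    ∃ w : List (Fin 4), (Mq n hn F).evalFrom ⟨0, by omega⟩ w = q := by
  by_cases h : q.val = 0
  · exact ⟨[], by apply Fin.ext; simp [DFA.evalFrom]; omega⟩
  · refine ⟨⟨3, by omega⟩ :: List.replicate (q.val - 1) ⟨0, by omega⟩, ?_⟩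
    rw [evalFrom_cons, step_e, eval_rep]
    apply Fin.ext
    rw [afk_val hn (by simp)]
    have := q.isLt
    simp [Nat.mod_eq_of_lt (by omega : q.val - 1 < n - 1)]
    omega

end S17

namespace S17
variable {n : ℕ} (hn : 3 ≤ n) {F : Set (Fin n)}

lemma step_zero_fix {q : Fin n} (hq : q.val = 0) {l : Fin 4} (hl : l.val ≠ 3) :
    (step17 n hn q l).val = 0 := by
  have := l.isLt
  simp only [step17]
  split
  · simp [hq]
  · split
    · rw [if_neg (show ¬ (q.val = n-1) by omega)]; exact hq
    · split
      · rw [if_neg (show ¬ (q.val = n-1) by omega)]; exact hq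
      · omega

lemma ideal_key (hF0 : ∀ q ∈ F, (q : ℕ) ≠ 0) (v : List (Fin 4)) (q : Fin n)
    (hv : (Mq n hn F).evalFrom ⟨0, by omega⟩ v ∈ F) :
    (Mq n hn F).evalFrom q v ∈ F := by
  induction v generalizing q with
  | nil => exact absurd (hF0 _ hv) (by simp)
  | cons l t ih =>
    rw [evalFrom_cons] at hv ⊢
    by_cases hl : l.val = 3
    · have hl' : l = ⟨3, by omega⟩ := Fin.ext hl
      rw [hl', step_e] at hv ⊢
      exact hv
    · have h0 : step17 n hn ⟨0, by omega⟩ l = ⟨0, by omega⟩ :=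
        Fin.ext (step_zero_fix hn rfl hl)
      rw [h0] at hv
      exact ih _ hv

lemma accepts_nonempty (hF : F.Nonempty) (hF0 : ∀ q ∈ F, (q : ℕ) ≠ 0) :
    ((Mq n hn F).accepts : Set (List (Fin 4))).Nonempty := by
  obtain ⟨f, hf⟩ := hF
  refine ⟨⟨3, by omega⟩ :: List.replicate (f.val - 1) ⟨0, by omega⟩, ?_⟩
  have : (Mq n hn F).evalFrom ⟨0, by omega⟩ _ = f := (reachable hn f).choose_spec
  obtain ⟨w, hw⟩ := reachable (F := F) hn f
  show _ ∈ (Mq n hn F).accepts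
  rw [mem_accepts' hn, evalFrom_cons, step_e, eval_rep]
  have hfv := f.isLt
  have hf0 := hF0 f hf
  have : (af n hn)^[f.val - 1] (⟨1, by omega⟩ : Fin n) = f := by
    apply Fin.ext
    rw [afk_val hn (by simp)]
    simp [Nat.mod_eq_of_lt (by omega : f.val - 1 < n - 1)]
    omega
  rw [this]; exact hf

end S17


namespace S17
variable {n : ℕ} (hn : 3 ≤ n) (F : Set (Fin n))

/-- the residual language of a state -/
def g (q : Fin n) : Set (List (Fin 4)) := {x | (Mq n hn F).evalFrom q x ∈ F}

variable {F}

lemma leftQ_eq (w : List (Fin 4)) :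
    leftQ ((Mq n hn F).accepts : Set (List (Fin 4))) w
      = g hn F ((Mq n hn F).evalFrom ⟨0, by omega⟩ w) := by
  ext x
  show (w ++ x) ∈ (Mq n hn F).accepts ↔ _
  rw [mem_accepts' hn]
  show (Mq n hn F).evalFrom _ (w ++ x) ∈ F ↔ _
  rw [DFA.evalFrom_of_append]
  rfl

/-- evaluation of the distinguishing word `a^k1 d a^k2` -/
lemma eval_dist (q : Fin n) (k1 k2 : ℕ) :
    (Mq n hn F).evalFrom q
      (List.replicate k1 ⟨0, by omega⟩ ++ ⟨2, by omega⟩ :: List.replicate k2 ⟨0, by omega⟩)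
      = (af n hn)^[k2] (step17 n hn ((af n hn)^[k1] q) ⟨2, by omega⟩) := by
  rw [DFA.evalFrom_of_append, eval_rep, evalFrom_cons, eval_rep]

lemma g_inj (hF : F.Nonempty) (hF0 : ∀ q ∈ F, (q : ℕ) ≠ 0) :
    Function.Injective (g hn F) := by
  obtain ⟨f, hf⟩ := hF
  have hf0 : f.val ≠ 0 := hF0 f hf
  have hfv := f.isLt
  intro p q hpq
  by_contra hne
  -- helper: a word sending a nonzero state to f while keeping 0 at 0
  have key : ∀ r : Fin n, r.val ≠ 0 → (List.replicate (f.val + (n-1) - r.val) ⟨0, by omega⟩ : List (Fin 4)) ∈ g hn F r := by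
    intro r hr
    show (Mq n hn F).evalFrom r _ ∈ F
    rw [eval_rep]
    have hrv := r.isLt
    have : (af n hn)^[f.val + (n-1) - r.val] r = f := by
      apply Fin.ext
      rw [afk_val hn hr]
      have : (r.val - 1 + (f.val + (n-1) - r.val)) = (f.val - 1) + (n-1) := by omega
      rw [this, Nat.add_mod_right, Nat.mod_eq_of_lt (by omega)]
      omega
    rw [this]; exact hf
  have key0 : ∀ k : ℕ, (List.replicate k (⟨0, by omega⟩ : Fin 4) : List (Fin 4)) ∉ g hn F ⟨0, by omega⟩ := by
    intro k hk
    have : (Mq n hn F).evalFrom ⟨0, by omega⟩ (List.replicate k ⟨0, by omega⟩) ∈ F := hk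
    rw [eval_rep, afk_zero hn rfl] at this
    exact absurd (hF0 _ this) (by simp)
  by_cases hp : p.val = 0 <;> by_cases hq : q.val = 0
  · exact hne (Fin.ext (by omega))
  · have hp' : p = ⟨0, by omega⟩ := Fin.ext hp
    have := key q hq
    rw [← hpq, hp'] at this
    exact key0 _ this
  · have hq' : q = ⟨0, by omega⟩ := Fin.ext hq
    have := key p hp
    rw [hpq, hq'] at this
    exact key0 _ this
  · -- both nonzero
    have hpv := p.isLt; have hqv := q.isLt
    set k1 := (n-1) - p.val with hk1
    have hp1 : (af n hn)^[k1] p = ⟨n-1, by omega⟩ := by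
      apply Fin.ext
      rw [afk_val hn hp]
      have : p.val - 1 + k1 = n - 2 := by omega
      rw [this, Nat.mod_eq_of_lt (by omega)]
      show n - 2 + 1 = n - 1
      omega
    have hq1 : ((af n hn)^[k1] q).val ≠ n-1 := by
      intro hcon
      apply hne
      apply afk_inj hn k1
      rw [hp1]; exact (Fin.ext hcon).symm
    have hq1' : ((af n hn)^[k1] q).val ≠ 0 := afk_ne_zero hn hq k1
    set q' := (af n hn)^[k1] q with hq'def
    set w := (List.replicate k1 (⟨0, by omega⟩ : Fin 4) ++ ⟨2, by omega⟩ :: List.replicate (f.val + (n-1) - q'.val) ⟨0, by omega⟩ : List (Fin 4)) with hw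
    have hwp : w ∉ g hn F p := by
      intro hcon
      have : (Mq n hn F).evalFrom p w ∈ F := hcon
      rw [hw, eval_dist hn, hp1, step_d] at this
      rw [if_pos (by simp)] at this
      rw [afk_zero hn rfl] at this
      exact absurd (hF0 _ this) (by simp)
    have hwq : w ∈ g hn F q := by
      show (Mq n hn F).evalFrom q w ∈ F
      rw [hw, eval_dist hn, step_d, if_neg hq1]
      have hq'v := q'.isLt
      have : (af n hn)^[f.val + (n-1) - q'.val] q' = f := by
        apply Fin.ext
        rw [afk_val hn hq1']
        have : (q'.val - 1 + (f.val + (n-1) - q'.val)) = (f.val - 1) + (n-1) := by omega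
        rw [this, Nat.add_mod_right, Nat.mod_eq_of_lt (by omega)]
        omega
      rw [this]; exact hf
    rw [hpq] at hwp
    exact hwp hwq

lemma quot_eq_n (hF : F.Nonempty) (hF0 : ∀ q ∈ F, (q : ℕ) ≠ 0) :
    quotCompl ((Mq n hn F).accepts : Set (List (Fin 4))) = n := by
  have hrange : Set.range (leftQ ((Mq n hn F).accepts : Set (List (Fin 4)))) = Set.range (g hn F) := by
    ext S
    constructor
    · rintro ⟨w, rfl⟩
      exact ⟨_, (leftQ_eq hn w).symm⟩
    · rintro ⟨q, rfl⟩
      obtain ⟨w, hw⟩ := reachable (F := F) hn q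
      exact ⟨w, by rw [leftQ_eq hn, hw]⟩
  unfold quotCompl; rw [hrange, Nat.card_range_of_injective (g_inj hn hF hF0), Nat.card_eq_fintype_card,
    Fintype.card_fin]

end S17


namespace S17
variable {n : ℕ} (hn : 3 ≤ n) (F : Set (Fin n))

/-- the "reverse subset" state reached by word `u`. -/
def T (u : List (Fin 4)) : Set (Fin n) := {q | (Mq n hn F).evalFrom q u ∈ F}

/-- the family of reachable reverse-subsets -/
def R : Set (Set (Fin n)) := Set.range (T hn F)

variable {F}

lemma T_nil : T hn F [] = F := rfl

lemma T_cons (l : Fin 4) (u : List (Fin 4)) :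
    T hn F (l :: u) = {q | step17 n hn q l ∈ T hn F u} := rfl

lemma R_F : F ∈ R hn F := ⟨[], rfl⟩

lemma R_step {S : Set (Fin n)} (hS : S ∈ R hn F) (l : Fin 4) :
    {q | step17 n hn q l ∈ S} ∈ R hn F := by
  obtain ⟨u, rfl⟩ := hS
  exact ⟨l :: u, rfl⟩

lemma R_rot {S : Set (Fin n)} (hS : S ∈ R hn F) (k : ℕ) :
    {q | (af n hn)^[k] q ∈ S} ∈ R hn F := by
  induction k with
  | zero => simpa using hS
  | succ k ih => exact R_step hn ih ⟨0, by omega⟩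

lemma R_del {S : Set (Fin n)} (hS : S ∈ R hn F) (hS0 : ∀ q ∈ S, q.val ≠ 0)
    {x : Fin n} (hx : x.val ≠ 0) : S \ {x} ∈ R hn F := by
  have hxv := x.isLt
  set s := (n-1) - x.val with hs
  have hxs : ((af n hn)^[s] x).val = n - 1 := by
    rw [afk_val hn hx]
    have : x.val - 1 + s = n - 2 := by omega
    rw [this, Nat.mod_eq_of_lt (by omega)]
    omega
  have h1 : {q : Fin n | (af n hn)^[(n-1)-s] q ∈ S} ∈ R hn F := R_rot hn hS _
  have h2 := R_step hn h1 ⟨2, by omega⟩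
  have h3 := R_rot hn h2 s
  convert h3 using 1
  ext q
  simp only [Set.mem_setOf_eq, Set.mem_diff, Set.mem_singleton_iff, step_d]
  by_cases hq : q = x
  · subst hq
    rw [if_pos hxs]
    simp only [Set.mem_setOf_eq]
    rw [afk_zero hn rfl]
    have h0 : (⟨0, by omega⟩ : Fin n) ∉ S := fun hc => hS0 _ hc rfl
    exact iff_of_false (by simp) h0
  · have hne : ((af n hn)^[s] q).val ≠ n - 1 := by
      intro hc
      exact hq (afk_inj hn s (Fin.ext (hc.trans hxs.symm)))
    rw [if_neg hne]
    show _ ↔ (af n hn)^[(n-1)-s] ((af n hn)^[s] q) ∈ S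
    rw [← Function.iterate_add_apply, show (n-1) - s + s = n - 1 by omega, afm]
    simp [hq]

lemma R_add {S : Set (Fin n)} (hS : S ∈ R hn F)
    {y : Fin n} (hy : y.val ≠ 0) (hay : af n hn y ∈ S) : S ∪ {y} ∈ R hn F := by
  have hyv := y.isLt
  set s := (n-1) - y.val with hs
  have hys : ((af n hn)^[s] y).val = n - 1 := by
    rw [afk_val hn hy]
    have : y.val - 1 + s = n - 2 := by omega
    rw [this, Nat.mod_eq_of_lt (by omega)]
    omega
  have h1 : {q : Fin n | (af n hn)^[(n-1)-s] q ∈ S} ∈ R hn F := R_rot hn hS _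
  have h2 := R_step hn h1 ⟨1, by omega⟩
  have h3 := R_rot hn h2 s
  convert h3 using 1
  have e1 : (⟨1, by omega⟩ : Fin n) = (af n hn)^[s+1] y := by
    symm; apply Fin.ext
    rw [Function.iterate_succ_apply', af_val hn (by rw [hys]; omega), hys, Nat.mod_self]
  have hone : (af n hn)^[(n-1)-s] (⟨1, by omega⟩ : Fin n) = af n hn y := by
    rw [e1, ← Function.iterate_add_apply, show (n-1)-s + (s+1) = 1 + (n-1) by omega,
      Function.iterate_add_apply, afm hn, Function.iterate_one]
  ext q
  simp only [Set.mem_union, Set.mem_singleton_iff, Set.mem_setOf_eq, step_c]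
  by_cases hq : q = y
  · subst hq
    rw [if_pos hys, hone]
    simp [hay]
  · have hne : ((af n hn)^[s] q).val ≠ n - 1 := by
      intro hc
      exact hq (afk_inj hn s (Fin.ext (hc.trans hys.symm)))
    rw [if_neg hne]
    show _ ↔ (af n hn)^[(n-1)-s] ((af n hn)^[s] q) ∈ S
    rw [← Function.iterate_add_apply, show (n-1) - s + s = n - 1 by omega, afm]
    simp [hq]

end S17


namespace S17
variable {n : ℕ} (hn : 3 ≤ n) {F : Set (Fin n)}

lemma R_diff {S : Set (Fin n)} (hS : S ∈ R hn F) (hS0 : ∀ q ∈ S, q.val ≠ 0)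
    (D : Finset (Fin n)) (hD : ∀ x ∈ D, x.val ≠ 0) : (S \ ↑D) ∈ R hn F := by
  classical
  induction D using Finset.induction with
  | empty => simpa using hS
  | @insert x D hx ih =>
    have h1 : S \ ↑(insert x D) = (S \ ↑D) \ {x} := by
      ext q
      simp only [Set.mem_diff, Finset.coe_insert, Set.mem_insert_iff, Finset.mem_coe,
        Set.mem_singleton_iff]
      tauto
    rw [h1]
    exact R_del hn (ih (fun q hq => hD q (Finset.mem_insert_of_mem hq)))
      (fun q hq => hS0 q hq.1) (hD x (Finset.mem_insert_self x D))

lemma R_grow (hF0 : ∀ q ∈ F, (q : ℕ) ≠ 0) {f : Fin n} (hf : f ∈ F)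
    (hsing : {f} ∈ R hn F) (k : ℕ) :
    {q : Fin n | ∃ i ≤ k, (af n hn)^[i] q = f} ∈ R hn F := by
  have hf0 : f.val ≠ 0 := hF0 f hf
  induction k with
  | zero =>
    have : {q : Fin n | ∃ i ≤ 0, (af n hn)^[i] q = f} = {f} := by
      ext q
      simp only [Set.mem_setOf_eq, Set.mem_singleton_iff, Nat.le_zero]
      constructor
      · rintro ⟨i, rfl, h⟩; exact h
      · rintro rfl; exact ⟨0, rfl, rfl⟩
    rw [this]; exact hsing
  | succ k ih =>
    set y := (af n hn)^[(n-1) - (k+1) % (n-1)] f with hy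
    have hy0 : y.val ≠ 0 := afk_ne_zero hn hf0 _
    have hky : (af n hn)^[k+1] y = f := by
      rw [hy, ← Function.iterate_add_apply]
      have : k + 1 + ((n-1) - (k+1) % (n-1)) = (n-1) * ((k+1)/(n-1)) + (n-1) := by
        have h1 := Nat.mod_lt (k+1) (show 0 < n-1 by omega)
        have h2 := Nat.div_add_mod (k+1) (n-1)
        omega
      rw [this]
      clear_value y
      generalize (k+1)/(n-1) = j
      induction j with
      | zero => simpa using afm hn f
      | succ j ihj =>
        rw [show (n-1) * (j+1) + (n-1) = ((n-1) * j + (n-1)) + (n-1) by ring,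
          Function.iterate_add_apply, afm hn]
        exact ihj
    have hstep : (af n hn) y ∈ {q : Fin n | ∃ i ≤ k, (af n hn)^[i] q = f} :=
      ⟨k, le_refl k, by rw [← Function.iterate_succ_apply]; exact hky⟩
    have := R_add hn ih hy0 hstep
    convert this using 1
    ext q
    simp only [Set.mem_setOf_eq, Set.mem_union, Set.mem_singleton_iff]
    constructor
    · rintro ⟨i, hi, hq⟩
      rcases Nat.lt_or_ge i (k+1) with h | h
      · exact Or.inl ⟨i, by omega, hq⟩
      · have : i = k + 1 := by omega
        subst this
        right
        exact afk_inj hn (k+1) (hq.trans hky.symm)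
    · rintro (⟨i, hi, hq⟩ | rfl)
      · exact ⟨i, by omega, hq⟩
      · exact ⟨k+1, le_refl _, hky⟩

lemma R_allOnes (hF : F.Nonempty) (hF0 : ∀ q ∈ F, (q : ℕ) ≠ 0) :
    {q : Fin n | q.val ≠ 0} ∈ R hn F := by
  classical
  obtain ⟨f, hf⟩ := hF
  have hf0 : f.val ≠ 0 := hF0 f hf
  have hfv := f.isLt
  -- first: the singleton {f}
  have hsing : ({f} : Set (Fin n)) ∈ R hn F := by
    have hfin : (F \ {f}).Finite := Set.toFinite _
    have := R_diff hn (R_F hn) hF0 hfin.toFinset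
      (fun x hx => by
        rw [Set.Finite.mem_toFinset] at hx
        exact hF0 x hx.1)
    convert this using 1
    ext q
    simp only [Set.mem_singleton_iff, Set.mem_diff, Set.Finite.coe_toFinset]
    constructor
    · rintro rfl; exact ⟨hf, fun h => h.2 rfl⟩
    · rintro ⟨hq, h2⟩
      by_contra hne
      exact h2 ⟨hq, hne⟩
  have := R_grow hn hF0 hf hsing (2*n)
  convert this using 1
  ext q
  simp only [Set.mem_setOf_eq]
  constructor
  · intro hq
    have hqv := q.isLt
    refine ⟨f.val + (n-1) - q.val, by omega, ?_⟩
    apply Fin.ext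
    rw [afk_val hn hq]
    have : (q.val - 1 + (f.val + (n-1) - q.val)) = (f.val - 1) + (n-1) := by omega
    rw [this, Nat.add_mod_right, Nat.mod_eq_of_lt (by omega)]
    omega
  · rintro ⟨i, hi, rfl⟩
    intro hq
    exact hf0 (by rw [afk_zero hn hq]; exact hq)

lemma R_univ (hF : F.Nonempty) (hF0 : ∀ q ∈ F, (q : ℕ) ≠ 0) :
    (Set.univ : Set (Fin n)) ∈ R hn F := by
  have h1 := R_step hn (R_allOnes hn hF hF0) ⟨3, by omega⟩
  convert h1 using 1
  ext q
  simp only [Set.mem_univ, Set.mem_setOf_eq, step_e, true_iff]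
  omega

/-- characterization of the reachable family -/
lemma R_eq (hF : F.Nonempty) (hF0 : ∀ q ∈ F, (q : ℕ) ≠ 0) :
    R hn F = insert Set.univ {S : Set (Fin n) | (⟨0, by omega⟩ : Fin n) ∉ S} := by
  apply Set.eq_of_subset_of_subset
  · rintro S ⟨u, rfl⟩
    induction u with
    | nil =>
      right
      exact fun hc => hF0 _ hc rfl
    | cons l t ih =>
      rcases ih with h | h
      · left
        rw [T_cons, h]
        ext q
        simp
      · by_cases hl : l.val = 3
        · by_cases h1 : (⟨1, by omega⟩ : Fin n) ∈ T hn F t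
          · left
            rw [T_cons]
            ext q
            rw [Set.mem_setOf_eq, step_e' hn hl]
            simp [h1]
          · right
            rw [T_cons]
            intro hc
            rw [Set.mem_setOf_eq, step_e' hn hl] at hc
            exact h1 hc
        · right
          rw [T_cons]
          intro hc
          simp only [Set.mem_setOf_eq] at hc
          rw [show step17 n hn ⟨0, by omega⟩ l = ⟨0, by omega⟩ from
            Fin.ext (step_zero_fix hn rfl hl)] at hc
          exact h hc
  · rintro S (rfl | hS)
    · exact R_univ hn hF hF0
    · have hS0 : ∀ q ∈ S, q.val ≠ 0 := by
        intro q hq hq0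
        exact hS (by rwa [show (⟨0, by omega⟩ : Fin n) = q from (Fin.ext hq0).symm])
      classical
      have hfin : (Sᶜ ∩ {q : Fin n | q.val ≠ 0}).Finite := Set.toFinite _
      have := R_diff hn (R_allOnes hn hF hF0)
        (fun q hq => hq) hfin.toFinset
        (fun x hx => by
          rw [Set.Finite.mem_toFinset] at hx
          exact hx.2)
      convert this using 1
      ext q
      simp only [Set.mem_diff, Set.Finite.coe_toFinset, Set.mem_inter_iff, Set.mem_compl_iff,
        Set.mem_setOf_eq]
      constructor
      · intro hq
        exact ⟨hS0 q hq, fun h => h.1 hq⟩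
      · rintro ⟨h1, h2⟩
        by_contra hq
        exact h2 ⟨hq, h1⟩

end S17


namespace S17
variable {n : ℕ} (hn : 3 ≤ n) (F : Set (Fin n))

/-- quotients of the reversed language, as sets of words -/
def ψ (S : Set (Fin n)) : Set (List (Fin 4)) :=
  {x | (Mq n hn F).evalFrom ⟨0, by omega⟩ x.reverse ∈ S}

variable {F}

lemma mem_langReverse (x : List (Fin 4)) :
    x ∈ langReverse ((Mq n hn F).accepts : Set (List (Fin 4))) ↔
      x.reverse ∈ (Mq n hn F).accepts := by
  constructor
  · rintro ⟨y, hy, rfl⟩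
    rw [List.reverse_reverse]; exact hy
  · intro h
    exact ⟨x.reverse, h, by simp⟩

lemma leftQ_rev (w : List (Fin 4)) :
    leftQ (langReverse ((Mq n hn F).accepts : Set (List (Fin 4)))) w
      = ψ hn F (T hn F w.reverse) := by
  ext x
  show (w ++ x) ∈ langReverse _ ↔ _
  rw [mem_langReverse hn, List.reverse_append, mem_accepts' hn, DFA.evalFrom_of_append]
  rfl

lemma psi_inj : Function.Injective (ψ hn F) := by
  intro S S' h
  ext q
  obtain ⟨w, hw⟩ := reachable (F := F) hn q
  have h1 : ∀ S₀ : Set (Fin n), q ∈ S₀ ↔ w.reverse ∈ ψ hn F S₀ := by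
    intro S₀
    show _ ↔ (Mq n hn F).evalFrom ⟨0, by omega⟩ w.reverse.reverse ∈ S₀
    rw [List.reverse_reverse, hw]
  rw [h1, h1, h]

lemma range_leftQ_rev :
    Set.range (leftQ (langReverse ((Mq n hn F).accepts : Set (List (Fin 4)))))
      = ψ hn F '' (R hn F) := by
  ext S
  constructor
  · rintro ⟨w, rfl⟩
    exact ⟨T hn F w.reverse, ⟨w.reverse, rfl⟩, (leftQ_rev hn w).symm⟩
  · rintro ⟨S₀, ⟨u, rfl⟩, rfl⟩
    exact ⟨u.reverse, by rw [leftQ_rev hn, List.reverse_reverse]⟩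

lemma card_R (hF : F.Nonempty) (hF0 : ∀ q ∈ F, (q : ℕ) ≠ 0) :
    (R hn F).ncard = 2 ^ (n-1) + 1 := by
  classical
  rw [R_eq hn hF hF0]
  set P := {S : Set (Fin n) | (⟨0, by omega⟩ : Fin n) ∉ S} with hP
  have huniv : (Set.univ : Set (Fin n)) ∉ P := by simp [hP]
  rw [Set.ncard_insert_of_notMem huniv (Set.toFinite P)]
  have hrange : P = Set.range
      (fun A : Set {q : Fin n // q ≠ ⟨0, by omega⟩} => (Subtype.val '' A : Set (Fin n))) := by
    ext S
    constructor
    · intro hS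
      refine ⟨{a | a.val ∈ S}, ?_⟩
      ext x
      simp only [Set.mem_image, Set.mem_setOf_eq, Subtype.exists, exists_and_left,
        exists_prop, exists_eq_right_right]
      exact ⟨fun h => h.1, fun h => ⟨h, fun hc => hS (hc ▸ h)⟩⟩
    · rintro ⟨A, rfl⟩
      rintro ⟨a, _, ha⟩
      exact a.2 ha
  have hinj : Function.Injective
      (fun A : Set {q : Fin n // q ≠ ⟨0, by omega⟩} => (Subtype.val '' A : Set (Fin n))) :=
    Set.image_injective.mpr Subtype.val_injective
  rw [hrange, ← Nat.card_coe_set_eq, Nat.card_range_of_injective hinj,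
    Nat.card_eq_fintype_card, Fintype.card_set]
  congr 2
  rw [Fintype.card_subtype_compl, Fintype.card_subtype_eq, Fintype.card_fin]

lemma quot_rev (hF : F.Nonempty) (hF0 : ∀ q ∈ F, (q : ℕ) ≠ 0) :
    quotCompl (langReverse ((Mq n hn F).accepts : Set (List (Fin 4)))) = 2 ^ (n-1) + 1 := by
  unfold quotCompl; rw [range_leftQ_rev hn, Nat.card_coe_set_eq,
    Set.ncard_image_of_injective _ (psi_inj hn), card_R hn hF hF0]

lemma left_ideal (hF : F.Nonempty) (hF0 : ∀ q ∈ F, (q : ℕ) ≠ 0) :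
    IsLeftIdeal ((Mq n hn F).accepts : Set (List (Fin 4))) := by
  refine ⟨accepts_nonempty hn hF hF0, ?_⟩
  apply Set.eq_of_subset_of_subset
  · intro x hx
    exact ⟨[], x, hx, rfl⟩
  · intro x hx
    obtain ⟨u, v, hv, rfl⟩ := hx
    show (u ++ v) ∈ (Mq n hn F).accepts
    rw [mem_accepts' hn, DFA.evalFrom_of_append]
    exact ideal_key hn hF0 v _ hv

end S17


/-- For every `n ≥ 3`, there is a left ideal over a
four-letter alphabet with quotient complexity `n` whose reverse has quotient
complexity exactly `2^{n-1} + 1`; a witness is the language of the DFA with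
states `{0,…,n-1}`, initial state `0`, any non-empty final set `F ⊆ {1,…,n-1}`,
and letters `a, c, d, e` acting as in `step17`. -/
theorem stmt_17 (n : ℕ) (hn : 3 ≤ n) (F : Set (Fin n)) (hF : F.Nonempty)
    (hF0 : ∀ q ∈ F, (q : ℕ) ≠ 0) :
    let M : DFA (Fin 4) (Fin n) :=
      { step := step17 n hn, start := ⟨0, by omega⟩, accept := F }
    IsLeftIdeal (M.accepts : Set (List (Fin 4))) ∧
    quotCompl (M.accepts : Set (List (Fin 4))) = n ∧
    quotCompl (langReverse (M.accepts : Set (List (Fin 4)))) = 2 ^ (n - 1) + 1 := by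
  intro M
  exact ⟨S17.left_ideal hn hF hF0, S17.quot_eq_n hn hF hF0, S17.quot_rev hn hF hF0⟩
end

section
/- For every n ≥ 4 there exists a two-sided ideal L over a four-letter alphabet with quotient complexity κ(L) = n whose reverse L^R has quotient complexity exactly 2^{n-2} + 1; such a witness is the language accepted by the DFA with states {0,1,…,n-1}, initial state 0, final state set {n-1}, and letters a = the cycle (1,2,…,n-2) fixing 0 and n-1, d mapping n-2 to 0 and fixing all other states, e mapping every state in {0,…,n-2} to 1 and fixing n-1, and f mapping 1 to n-1 and fixing all other states. -/
/-- The transition function of the automaton of Definition 4 restricted to the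
letters `{a, d, e, f}`: `a = (1,2,…,n-2)` fixing `0` and `n-1`, `d : n-2 ↦ 0`,
`e` maps every state in `{0,…,n-2}` to `1` and fixes `n-1`, and `f : 1 ↦ n-1`. -/
def step19 (n : ℕ) (hn : 4 ≤ n) : Fin n → Fin 4 → Fin n := fun q l =>
  if l.val = 0 then -- a : the cycle (1, 2, …, n-2), fixing 0 and n-1
    if q.val = 0 then q
    else if q.val = n - 2 then ⟨1, by omega⟩
    else if _h : q.val = n - 1 then q
    else ⟨q.val + 1, by have := q.isLt; omega⟩
  else if l.val = 1 then -- d : n-2 ↦ 0, fixing all other states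
    if q.val = n - 2 then ⟨0, by omega⟩ else q
  else if l.val = 2 then -- e : every state in {0,…,n-2} ↦ 1, fixing n-1
    if q.val = n - 1 then q else ⟨1, by omega⟩
  else -- f : 1 ↦ n-1, fixing all other states
    if q.val = 1 then ⟨n - 1, by omega⟩ else q

set_option linter.unnecessarySeqFocus false

namespace S19

abbrev la : Fin 4 := ⟨0, Nat.succ_le_succ (Nat.zero_le 3)⟩
abbrev ld : Fin 4 := ⟨1, Nat.succ_le_succ (Nat.succ_le_succ (Nat.zero_le 2))⟩
abbrev le : Fin 4 := ⟨2, Nat.succ_le_succ (Nat.succ_le_succ (Nat.succ_le_succ (Nat.zero_le 1)))⟩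
abbrev lf : Fin 4 := ⟨3, Nat.le_refl 4⟩

variable (n : ℕ) (hn : 4 ≤ n)

def M19 : DFA (Fin 4) (Fin n) :=
  { step := step19 n hn, start := ⟨0, by omega⟩, accept := {⟨n - 1, by omega⟩} }

lemma step_a (q : Fin n) : ((M19 n hn).step q la).val =
    if q.val = 0 ∨ q.val = n-1 then q.val else if q.val = n-2 then 1 else q.val+1 := by
  show (step19 n hn q la).val = _
  unfold step19; split_ifs <;> simp_all <;> omega

lemma step_d (q : Fin n) : ((M19 n hn).step q ld).val =
    if q.val = n-2 then 0 else q.val := by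
  show (step19 n hn q ld).val = _
  unfold step19; split_ifs <;> simp_all

lemma step_e (q : Fin n) : ((M19 n hn).step q le).val =
    if q.val = n-1 then q.val else 1 := by
  show (step19 n hn q le).val = _
  unfold step19; split_ifs <;> simp_all

lemma step_f (q : Fin n) : ((M19 n hn).step q lf).val =
    if q.val = 1 then n-1 else q.val := by
  show (step19 n hn q lf).val = _
  unfold step19; split_ifs <;> simp_all

lemma step_cases (q : Fin n) (l : Fin 4) :
    ((M19 n hn).step q l).val =
      if l.val = 0 then
        (if q.val = 0 ∨ q.val = n-1 then q.val else if q.val = n-2 then 1 else q.val+1)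
      else if l.val = 1 then (if q.val = n-2 then 0 else q.val)
      else if l.val = 2 then (if q.val = n-1 then q.val else 1)
      else (if q.val = 1 then n-1 else q.val) := by
  show (step19 n hn q l).val = _
  unfold step19; split_ifs <;> simp_all <;> omega

lemma step_last (q : Fin n) (hq : q.val = n-1) (l : Fin 4) :
    ((M19 n hn).step q l).val = n-1 := by
  rw [step_cases]; split_ifs <;> omega

lemma eval_cons (q : Fin n) (l : Fin 4) (w : List (Fin 4)) :
    (M19 n hn).evalFrom q (l :: w) = (M19 n hn).evalFrom ((M19 n hn).step q l) w := rfl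

lemma eval_last (w : List (Fin 4)) (q : Fin n) (hq : q.val = n-1) :
    ((M19 n hn).evalFrom q w).val = n-1 := by
  induction w generalizing q with
  | nil => exact hq
  | cons l w ih => rw [eval_cons]; exact ih _ (step_last n hn q hq l)

def Sim (p q : ℕ) : Prop := p = 0 ∨ q = n-1 ∨ p = q

lemma sim_step (p q : Fin n) (l : Fin 4) (h : Sim n p.val q.val) :
    Sim n ((M19 n hn).step p l).val ((M19 n hn).step q l).val := by
  have hp := p.isLt; have hq := q.isLt
  unfold Sim at *
  rw [step_cases, step_cases]
  split_ifs <;> omega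

lemma sim_eval (w : List (Fin 4)) (p q : Fin n) (h : Sim n p.val q.val) :
    Sim n ((M19 n hn).evalFrom p w).val ((M19 n hn).evalFrom q w).val := by
  induction w generalizing p q with
  | nil => exact h
  | cons l w ih => exact ih _ _ (sim_step n hn p q l h)

lemma mem_accepts (x : List (Fin 4)) :
    x ∈ (M19 n hn).accepts ↔ ((M19 n hn).evalFrom ⟨0, by omega⟩ x).val = n-1 := by
  rw [DFA.mem_accepts]
  show _ ∈ ({⟨n-1, by omega⟩} : Set (Fin n)) ↔ _
  simp [Fin.ext_iff, M19, DFA.eval]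

/-- the cycle formula for `a` -/
lemma eval_rep_a (k : ℕ) (q : Fin n) (h1 : 1 ≤ q.val) (h2 : q.val ≤ n-2) :
    ((M19 n hn).evalFrom q (List.replicate k (la))).val = (q.val - 1 + k) % (n-2) + 1 := by
  induction k generalizing q with
  | zero =>
    show q.val = _
    rw [Nat.mod_eq_of_lt (by omega)]; omega
  | succ k ih =>
    rw [List.replicate_succ, eval_cons]
    have hs := step_a n hn q
    by_cases hq : q.val = n-2
    · rw [if_neg (by omega), if_pos hq] at hs
      rw [ih _ (by omega) (by omega), hs]
      rw [show (1:ℕ) - 1 + k = k from by omega,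
        show q.val - 1 + (k+1) = n - 2 + k from by omega, Nat.add_mod_left]
    · rw [if_neg (by omega), if_neg hq] at hs
      rw [ih _ (by omega) (by omega), hs,
        show q.val + 1 - 1 + k = q.val - 1 + (k+1) from by omega]

lemma eval_rep_a_zero (k : ℕ) (q : Fin n) (h : q.val = 0) :
    ((M19 n hn).evalFrom q (List.replicate k (la))).val = 0 := by
  induction k generalizing q with
  | zero => exact h
  | succ k ih =>
    rw [List.replicate_succ, eval_cons]
    refine ih _ ?_
    rw [step_a]; split_ifs <;> omega

lemma reach (q : Fin n) : ∃ w, (M19 n hn).evalFrom ⟨0, by omega⟩ w = q := by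
  have h1e : ((M19 n hn).step ⟨0, by omega⟩ le).val = 1 := by
    rw [step_e]; split_ifs with h <;> simp_all <;> omega
  by_cases h0 : q.val = 0
  · exact ⟨[], by apply Fin.ext; simpa using h0.symm⟩
  by_cases hl : q.val = n-1
  · refine ⟨[le, lf], Fin.ext ?_⟩
    rw [eval_cons, eval_cons]
    show ((M19 n hn).step _ lf).val = _
    rw [step_f, if_pos h1e, hl]
  · have hq2 : q.val ≤ n - 2 := by have := q.isLt; omega
    refine ⟨le :: List.replicate (q.val - 1) la, Fin.ext ?_⟩
    rw [eval_cons]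
    rw [eval_rep_a n hn _ _ (by omega) (by omega), h1e]
    rw [Nat.mod_eq_of_lt (by omega)]
    omega

lemma mod_ne_zero (A : ℕ) (hA : 0 < A) (hA2 : A < 2*(n-2)) (hA3 : A ≠ n-2) :
    A % (n-2) ≠ 0 := by
  rcases lt_or_ge A (n-2) with h | h
  · rw [Nat.mod_eq_of_lt h]; omega
  · rw [Nat.mod_eq_sub_mod h, Nat.mod_eq_of_lt (by omega)]; omega

/-- distinguishing word for a `mid` state q against any other state p ≤ n-2 -/
lemma dist_word (p q : Fin n) (hne : p.val ≠ q.val) (hq1 : 1 ≤ q.val) (hq2 : q.val ≤ n-2)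
    (hp : p.val ≤ n-2) :
    ((M19 n hn).evalFrom q (List.replicate (n-1-q.val) la ++ [lf])).val = n-1 ∧
    ((M19 n hn).evalFrom p (List.replicate (n-1-q.val) la ++ [lf])).val ≠ n-1 := by
  constructor
  · rw [DFA.evalFrom_of_append]
    have h1 : ((M19 n hn).evalFrom q (List.replicate (n-1-q.val) la)).val = 1 := by
      rw [eval_rep_a n hn _ _ hq1 hq2, show q.val - 1 + (n-1-q.val) = n-2 from by omega,
        Nat.mod_self]
    show ((M19 n hn).step _ lf).val = n-1
    rw [step_f, if_pos h1]
  · rw [DFA.evalFrom_of_append]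
    by_cases hp0 : p.val = 0
    · have h1 : ((M19 n hn).evalFrom p (List.replicate (n-1-q.val) la)).val = 0 :=
        eval_rep_a_zero n hn _ _ hp0
      show ((M19 n hn).step _ lf).val ≠ n-1
      rw [step_f]; split_ifs <;> omega
    · have h1 := eval_rep_a n hn (n-1-q.val) p (by omega) hp
      have hne1 : (p.val - 1 + (n-1-q.val)) % (n-2) ≠ 0 :=
        mod_ne_zero n _ (by omega) (by omega) (by omega)
      have hlt : (p.val - 1 + (n-1-q.val)) % (n-2) < n - 2 := Nat.mod_lt _ (by omega)
      show ((M19 n hn).step _ lf).val ≠ n-1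
      rw [step_f]; split_ifs <;> omega

lemma distinguish (p q : Fin n)
    (h : ∀ w, ((M19 n hn).evalFrom p w).val = n-1 ↔ ((M19 n hn).evalFrom q w).val = n-1) :
    p = q := by
  by_contra hne
  have hne' : p.val ≠ q.val := fun hh => hne (Fin.ext hh)
  have hnil := h []
  simp only [DFA.evalFrom_nil] at hnil
  have hp := p.isLt; have hq := q.isLt
  by_cases hpl : p.val = n-1
  · exact hne' (by omega)
  by_cases hql : q.val = n-1
  · exact hne' (by omega)
  by_cases hq1 : 1 ≤ q.val
  · obtain ⟨h1, h2⟩ := dist_word n hn p q hne' hq1 (by omega) (by omega)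
    exact h2 ((h _).mpr h1)
  · have hp1 : 1 ≤ p.val := by omega
    obtain ⟨h1, h2⟩ := dist_word n hn q p (by omega) hp1 (by omega) (by omega)
    exact h2 ((h _).mp h1)

/-! ### quotient complexity of L -/

def Lang (q : Fin n) : Set (List (Fin 4)) := {x | ((M19 n hn).evalFrom q x).val = n-1}

lemma Lang_inj : Function.Injective (Lang n hn) := by
  intro p q h
  exact distinguish n hn p q fun w => Set.ext_iff.mp h w

end S19

namespace S19
variable (n : ℕ) (hn : 4 ≤ n)

lemma leftQ_eq_Lang (w : List (Fin 4)) :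
    leftQ ((M19 n hn).accepts : Set (List (Fin 4))) w
      = Lang n hn ((M19 n hn).evalFrom ⟨0, by omega⟩ w) := by
  ext x
  show w ++ x ∈ (M19 n hn).accepts ↔ _
  rw [mem_accepts, DFA.evalFrom_of_append]
  rfl

lemma range_leftQ : Set.range (leftQ ((M19 n hn).accepts : Set (List (Fin 4))))
    = Set.range (Lang n hn) := by
  ext L
  constructor
  · rintro ⟨w, rfl⟩
    exact ⟨_, (leftQ_eq_Lang n hn w).symm⟩
  · rintro ⟨q, rfl⟩
    obtain ⟨w, hw⟩ := reach n hn q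
    exact ⟨w, by rw [leftQ_eq_Lang, hw]⟩

lemma quot_L : quotCompl ((M19 n hn).accepts : Set (List (Fin 4))) = n := by
  unfold quotCompl
  rw [range_leftQ]
  rw [Nat.card_congr (Equiv.ofInjective _ (Lang_inj n hn)).symm]
  simp

end S19

namespace S19
variable (n : ℕ) (hn : 4 ≤ n)

lemma ef_mem : [le, lf] ∈ (M19 n hn).accepts := by
  rw [mem_accepts]
  show ((M19 n hn).step ((M19 n hn).step _ le) lf).val = n-1
  have h1 : ((M19 n hn).step (⟨0, by omega⟩ : Fin n) le).val = 1 := by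
    rw [step_e]; split_ifs with h <;> simp_all <;> omega
  rw [step_f, if_pos h1]

lemma ideal : IsTwoSidedIdeal ((M19 n hn).accepts : Set (List (Fin 4))) := by
  constructor
  · exact ⟨[le, lf], ef_mem n hn⟩
  · ext x
    constructor
    · intro hx
      exact ⟨[], x, hx, [], by simp⟩
    · rintro ⟨u, w, hw, v, rfl⟩
      replace hw := (mem_accepts n hn w).mp hw; apply (mem_accepts n hn _).mpr
      rw [show u ++ w ++ v = u ++ (w ++ v) from by simp, DFA.evalFrom_of_append,
        DFA.evalFrom_of_append]
      apply eval_last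
      have hs := sim_eval n hn w ⟨0, by omega⟩ ((M19 n hn).evalFrom ⟨0, by omega⟩ u)
        (Or.inl rfl)
      unfold Sim at hs
      omega

end S19

namespace S19
variable (n : ℕ) (hn : 4 ≤ n)

def lastS : Fin n := ⟨n-1, by omega⟩
def zeroS : Fin n := ⟨0, by omega⟩
def oneS : Fin n := ⟨1, by omega⟩

def Pre (u : List (Fin 4)) : Set (Fin n) := {q | ((M19 n hn).evalFrom q u).val = n-1}

lemma Pre_nil : Pre n hn [] = {lastS n hn} := by
  ext q
  show q.val = n-1 ↔ q ∈ ({lastS n hn} : Set (Fin n))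
  simp [lastS, Fin.ext_iff]

lemma Pre_cons (l : Fin 4) (u : List (Fin 4)) :
    Pre n hn (l :: u) = {q | (M19 n hn).step q l ∈ Pre n hn u} := rfl

lemma Pre_append (w u : List (Fin 4)) :
    Pre n hn (w ++ u) = (fun q => (M19 n hn).evalFrom q w) ⁻¹' Pre n hn u := by
  ext q
  show ((M19 n hn).evalFrom q (w ++ u)).val = n-1 ↔ _
  rw [DFA.evalFrom_of_append]
  rfl

lemma last_mem_Pre (u : List (Fin 4)) : lastS n hn ∈ Pre n hn u := eval_last n hn u _ rfl

def GoodT (T : Set (Fin n)) : Prop := lastS n hn ∈ T ∧ (zeroS n hn ∈ T → T = Set.univ)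

lemma good_Pre (u : List (Fin 4)) : GoodT n hn (Pre n hn u) := by
  induction u with
  | nil =>
    refine ⟨last_mem_Pre n hn [], fun hz => absurd hz ?_⟩
    rw [Pre_nil]
    simp [lastS, zeroS, Fin.ext_iff]
    omega
  | cons l u ih =>
    refine ⟨last_mem_Pre n hn _, fun hz => ?_⟩
    rw [Pre_cons] at hz
    by_cases hl2 : l.val = 2
    · have hle : l = le := Fin.ext hl2
      subst hle
      have h1 : ((M19 n hn).step (zeroS n hn) le).val = 1 := by
        rw [step_e, if_neg (show (zeroS n hn).val ≠ n-1 from by show 0 ≠ n-1; omega)]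
      apply Set.eq_univ_iff_forall.mpr
      intro q
      rw [Pre_cons]
      by_cases hq : q.val = n-1
      · show _ ∈ Pre n hn u
        have : (M19 n hn).step q le = lastS n hn := by
          apply Fin.ext
          rw [step_e, if_pos hq, hq]; rfl
        rw [this]; exact last_mem_Pre n hn u
      · have : (M19 n hn).step q le = (M19 n hn).step (zeroS n hn) le := by
          apply Fin.ext
          rw [step_e, if_neg hq, h1]
        show _ ∈ Pre n hn u
        rw [this]; exact hz
    · have hstep : (M19 n hn).step (zeroS n hn) l = zeroS n hn := by
        apply Fin.ext
        rw [step_cases]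
        simp only [show (zeroS n hn).val = 0 from rfl]
        split_ifs <;> first | omega | simp_all
      simp only [Set.mem_setOf_eq] at hz
      rw [hstep] at hz
      have huniv := ih.2 hz
      apply Set.eq_univ_iff_forall.mpr
      intro q
      rw [Pre_cons]
      show _ ∈ Pre n hn u
      rw [huniv]
      trivial

lemma pre_univ : Pre n hn [le, lf] = Set.univ := by
  apply Set.eq_univ_iff_forall.mpr
  intro q
  show ((M19 n hn).step ((M19 n hn).step q le) lf).val = n-1
  by_cases hq : q.val = n-1
  · have h1 : ((M19 n hn).step q le).val = n-1 := by rw [step_e, if_pos hq, hq]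
    rw [step_f, h1]
    split_ifs <;> omega
  · have h1 : ((M19 n hn).step q le).val = 1 := by rw [step_e, if_neg hq]
    rw [step_f, if_pos h1]

lemma eval_rep_val (j : ℕ) (q : Fin n) :
    ((M19 n hn).evalFrom q (List.replicate j la)).val =
      if q.val = 0 then 0 else if q.val = n-1 then n-1 else (q.val-1+j)%(n-2)+1 := by
  split_ifs with h0 hl
  · exact eval_rep_a_zero n hn j q h0
  · exact eval_last n hn _ q hl
  · exact eval_rep_a n hn j q (by omega) (by have := q.isLt; omega)

lemma rho_inj (j : ℕ) :
    Function.Injective (fun q : Fin n => (M19 n hn).evalFrom q (List.replicate j la)) := by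
  intro p q h
  have hv := congrArg Fin.val h
  simp only [eval_rep_val] at hv
  have hp := p.isLt; have hq := q.isLt
  have hm1 : (p.val-1+j)%(n-2) < n-2 := Nat.mod_lt _ (by omega)
  have hm2 : (q.val-1+j)%(n-2) < n-2 := Nat.mod_lt _ (by omega)
  apply Fin.ext
  split_ifs at hv <;> try omega
  have hv' : (p.val-1+j)%(n-2) = (q.val-1+j)%(n-2) := by omega
  have h2 : (p.val-1) % (n-2) = (q.val-1) % (n-2) := Nat.ModEq.add_right_cancel' j hv'
  rw [Nat.mod_eq_of_lt (by omega), Nat.mod_eq_of_lt (by omega)] at h2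
  omega

end S19

namespace S19
variable (n : ℕ) (hn : 4 ≤ n)

lemma reachPre : ∀ (k : ℕ) (T : Set (Fin n)), (T \ {lastS n hn}).ncard = k →
    lastS n hn ∈ T → zeroS n hn ∉ T → ∃ u, Pre n hn u = T := by
  intro k
  induction k using Nat.strong_induction_on with
  | _ k IH =>
  intro T hk hl hz
  rcases Nat.eq_zero_or_pos k with h0 | hpos
  · subst h0
    have hempty : T \ {lastS n hn} = ∅ := (Set.ncard_eq_zero (Set.toFinite _)).mp hk
    have hT : T = {lastS n hn} := by
      apply Set.eq_singleton_iff_unique_mem.mpr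
      refine ⟨hl, fun x hx => ?_⟩
      by_contra hne
      have : x ∈ T \ {lastS n hn} := ⟨hx, hne⟩
      rw [hempty] at this
      exact this
    exact ⟨[], by rw [Pre_nil, hT]⟩
  · obtain ⟨s, hsT, hslast⟩ := Set.nonempty_of_ncard_ne_zero (s := T \ {lastS n hn}) (by omega)
    rw [Set.mem_singleton_iff] at hslast
    have hs1 : s.val ≠ n-1 := fun h => hslast (Fin.ext h)
    have hs0 : s.val ≠ 0 := fun h => hz (by rwa [show s = zeroS n hn from Fin.ext h] at hsT)
    have hslt := s.isLt
    set j := n - 1 - s.val with hj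
    set ρ : Fin n → Fin n := fun q => (M19 n hn).evalFrom q (List.replicate j la) with hρ
    have hinj : Function.Injective ρ := rho_inj n hn j
    set V : Set (Fin n) := ρ '' T with hV
    have hrl : ρ (lastS n hn) = lastS n hn := by
      apply Fin.ext
      rw [hρ]
      simp only [eval_rep_val]
      simp only [show (lastS n hn).val = n-1 from rfl]
      split_ifs <;> omega
    have hrz : ρ (zeroS n hn) = zeroS n hn := by
      apply Fin.ext
      exact eval_rep_a_zero n hn j _ rfl
    have hVl : lastS n hn ∈ V := ⟨lastS n hn, hl, hrl⟩
    have hVz : zeroS n hn ∉ V := by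
      rintro ⟨t, htT, hteq⟩
      exact hz (hinj (hteq.trans hrz.symm) ▸ htT)
    have hV1 : oneS n hn ∈ V := by
      refine ⟨s, hsT, Fin.ext ?_⟩
      rw [hρ]
      simp only [eval_rep_val]
      rw [if_neg hs0, if_neg hs1,
        show s.val - 1 + j = n-2 from by omega, Nat.mod_self]
      rfl
    have hVdiff : V \ {lastS n hn} = ρ '' (T \ {lastS n hn}) := by
      ext x
      constructor
      · rintro ⟨⟨t, htT, rfl⟩, hxl⟩
        refine ⟨t, ⟨htT, fun ht => hxl ?_⟩, rfl⟩
        rw [Set.mem_singleton_iff] at ht ⊢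
        rw [ht, hrl]
      · rintro ⟨t, ⟨htT, htl⟩, rfl⟩
        refine ⟨⟨t, htT, rfl⟩, fun hx => htl ?_⟩
        rw [Set.mem_singleton_iff] at hx ⊢
        exact hinj (hx.trans hrl.symm)
    have hVcard : (V \ {lastS n hn}).ncard = k := by
      rw [hVdiff, Set.ncard_image_of_injective _ hinj, hk]
    have hone_ne_last : oneS n hn ≠ lastS n hn := by
      intro h
      have := congrArg Fin.val h
      simp [oneS, lastS] at this
      omega
    set T' : Set (Fin n) := V \ {oneS n hn} with hT'
    have hT'l : lastS n hn ∈ T' := by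
      rw [hT']
      exact ⟨hVl, fun h => hone_ne_last (Set.mem_singleton_iff.mp h).symm⟩
    have hT'z : zeroS n hn ∉ T' := fun h => hVz h.1
    have hT'card : (T' \ {lastS n hn}).ncard = k - 1 := by
      have hcomm : T' \ {lastS n hn} = (V \ {lastS n hn}) \ {oneS n hn} := by
        rw [hT', Set.diff_diff_comm]
      have hmem : oneS n hn ∈ V \ {lastS n hn} := ⟨hV1, by simpa using hone_ne_last⟩
      rw [hcomm, Set.ncard_diff_singleton_of_mem hmem, hVcard]
    obtain ⟨u', hu'⟩ := IH (k-1) (by omega) T' hT'card hT'l hT'z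
    have hfV : Pre n hn (lf :: u') = V := by
      ext q
      rw [Pre_cons]
      simp only [Set.mem_setOf_eq, hu']
      by_cases hq1 : q.val = 1
      · have hqone : q = oneS n hn := Fin.ext hq1
        have hstep : (M19 n hn).step q lf = lastS n hn := by
          apply Fin.ext
          rw [step_f, if_pos hq1]
          rfl
        rw [hstep]
        simp only [hqone]
        exact ⟨fun _ => hV1, fun _ => hT'l⟩
      · have hstep : (M19 n hn).step q lf = q := by
          apply Fin.ext
          rw [step_f, if_neg hq1]
        rw [hstep, hT']
        constructor
        · exact fun h => h.1
        · exact fun h => ⟨h, fun hc => hq1 (congrArg Fin.val (Set.mem_singleton_iff.mp hc))⟩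
    refine ⟨List.replicate j la ++ (lf :: u'), ?_⟩
    rw [Pre_append, hfV, hV, ← hρ, Set.preimage_image_eq _ hinj]

lemma range_Pre : Set.range (Pre n hn) = {T | GoodT n hn T} := by
  ext T
  constructor
  · rintro ⟨u, rfl⟩
    exact good_Pre n hn u
  · rintro ⟨h1, h2⟩
    by_cases hz : zeroS n hn ∈ T
    · exact ⟨[le, lf], (pre_univ n hn).trans (h2 hz).symm⟩
    · exact reachPre n hn _ T rfl h1 hz

end S19

namespace S19
variable (n : ℕ) (hn : 4 ≤ n)

def psi (S : Fin (n-2) → Prop) : Set (Fin n) :=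
  {q | q.val = n-1 ∨ ∃ i : Fin (n-2), S i ∧ q.val = i.val + 1}

lemma mem_psi_iff (S : Fin (n-2) → Prop) (i : Fin (n-2)) :
    (⟨i.val+1, by have := i.isLt; omega⟩ : Fin n) ∈ psi n S ↔ S i := by
  constructor
  · rintro (h | ⟨i', hS, hv⟩)
    · exact absurd h (by have := i.isLt; simp; omega)
    · have : i' = i := Fin.ext (by simpa using hv.symm)
      exact this ▸ hS
  · intro h
    exact Or.inr ⟨i, h, rfl⟩

lemma psi_inj (hn : 4 ≤ n) : Function.Injective (psi n) := by
  intro S S' h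
  funext i
  apply propext
  rw [← mem_psi_iff n hn S i, ← mem_psi_iff n hn S' i, h]

lemma range_psi : Set.range (psi n) = {T | lastS n hn ∈ T ∧ zeroS n hn ∉ T} := by
  ext T
  constructor
  · rintro ⟨S, rfl⟩
    constructor
    · exact Or.inl rfl
    · rintro (h | ⟨i, _, hv⟩)
      · have : (zeroS n hn).val = 0 := rfl
        omega
      · have : (zeroS n hn).val = 0 := rfl
        omega
  · rintro ⟨h1, h2⟩
    refine ⟨fun i => (⟨i.val+1, by have := i.isLt; omega⟩ : Fin n) ∈ T, ?_⟩
    ext q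
    constructor
    · rintro (h | ⟨i, hT, hv⟩)
      · rwa [show q = lastS n hn from Fin.ext h]
      · rwa [show q = ⟨i.val+1, by have := i.isLt; omega⟩ from Fin.ext hv]
    · intro hq
      by_cases hql : q.val = n-1
      · exact Or.inl hql
      · have hq0 : q.val ≠ 0 := fun h => h2 (by rwa [show q = zeroS n hn from Fin.ext h] at hq)
        have hqlt := q.isLt
        refine Or.inr ⟨⟨q.val - 1, by omega⟩, ?_, show q.val = q.val - 1 + 1 by omega⟩
        show (⟨q.val - 1 + 1, by omega⟩ : Fin n) ∈ T
        have heq : (⟨q.val - 1 + 1, by omega⟩ : Fin n) = q := Fin.ext (show q.val - 1 + 1 = q.val by omega)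
        rwa [heq]

lemma good_eq : {T | GoodT n hn T} = insert Set.univ (Set.range (psi n)) := by
  rw [range_psi n hn]
  ext T
  constructor
  · rintro ⟨h1, h2⟩
    by_cases hz : zeroS n hn ∈ T
    · exact Or.inl (h2 hz)
    · exact Or.inr ⟨h1, hz⟩
  · rintro (rfl | ⟨h1, h2⟩)
    · exact ⟨trivial, fun _ => rfl⟩
    · exact ⟨h1, fun hz => absurd hz h2⟩

lemma card_good : Nat.card {T | GoodT n hn T} = 2^(n-2) + 1 := by
  rw [Nat.card_coe_set_eq, good_eq n hn]
  have hnotmem : Set.univ ∉ Set.range (psi n) := by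
    rw [range_psi n hn]
    rintro ⟨-, h2⟩
    exact h2 trivial
  rw [Set.ncard_insert_of_notMem hnotmem (Set.toFinite _)]
  congr 1
  rw [← Nat.card_coe_set_eq, Nat.card_congr (Equiv.ofInjective _ (psi_inj n hn)).symm,
    Nat.card_fun]
  simp [Nat.card_congr Equiv.propEquivBool]

def Phi (T : Set (Fin n)) : Set (List (Fin 4)) :=
  {x | (M19 n hn).evalFrom ⟨0, by omega⟩ x.reverse ∈ T}

lemma mem_langReverse (x : List (Fin 4)) :
    x ∈ langReverse ((M19 n hn).accepts : Set (List (Fin 4))) ↔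
      x.reverse ∈ (M19 n hn).accepts := by
  constructor
  · rintro ⟨y, hy, rfl⟩
    rwa [List.reverse_reverse]
  · intro h
    exact ⟨x.reverse, h, List.reverse_reverse x⟩

lemma leftQ_rev (w : List (Fin 4)) :
    leftQ (langReverse ((M19 n hn).accepts : Set (List (Fin 4)))) w
      = Phi n hn (Pre n hn w.reverse) := by
  ext x
  simp only [leftQ, Set.mem_setOf_eq]
  rw [mem_langReverse, mem_accepts, List.reverse_append, DFA.evalFrom_of_append]
  rfl

lemma range_leftQ_rev :
    Set.range (leftQ (langReverse ((M19 n hn).accepts : Set (List (Fin 4)))))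
      = Phi n hn '' {T | GoodT n hn T} := by
  ext L
  constructor
  · rintro ⟨w, rfl⟩
    exact ⟨Pre n hn w.reverse, good_Pre n hn w.reverse, (leftQ_rev n hn w).symm⟩
  · rintro ⟨T, hT, rfl⟩
    have hT2 : T ∈ Set.range (Pre n hn) := by rw [range_Pre n hn]; exact hT
    obtain ⟨u, hu⟩ := hT2
    refine ⟨u.reverse, ?_⟩
    rw [leftQ_rev, List.reverse_reverse, hu]

lemma Phi_inj : Function.Injective (Phi n hn) := by
  intro T T' h
  ext q
  obtain ⟨w, hw⟩ := reach n hn q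
  have key : ∀ (U : Set (Fin n)), q ∈ U ↔ w.reverse ∈ Phi n hn U := by
    intro U
    show _ ↔ (M19 n hn).evalFrom ⟨0, by omega⟩ w.reverse.reverse ∈ U
    rw [List.reverse_reverse, hw]
  rw [key T, key T', h]

lemma quot_rev :
    quotCompl (langReverse ((M19 n hn).accepts : Set (List (Fin 4)))) = 2^(n-2) + 1 := by
  unfold quotCompl
  rw [range_leftQ_rev, Nat.card_coe_set_eq,
    Set.ncard_image_of_injective _ (Phi_inj n hn), ← Nat.card_coe_set_eq]
  exact card_good n hn

end S19

/-- For every `n ≥ 4`, there is a two-sided ideal over a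
four-letter alphabet with quotient complexity `n` whose reverse has quotient
complexity exactly `2^{n-2} + 1`; a witness is the language of the DFA with
states `{0,…,n-1}`, initial state `0`, final state `n-1`, and letters
`a, d, e, f` acting as in `step19`. -/
theorem stmt_19 (n : ℕ) (hn : 4 ≤ n) :
    let M : DFA (Fin 4) (Fin n) :=
      { step := step19 n hn, start := ⟨0, by omega⟩, accept := {⟨n - 1, by omega⟩} }
    IsTwoSidedIdeal (M.accepts : Set (List (Fin 4))) ∧
    quotCompl (M.accepts : Set (List (Fin 4))) = n ∧
    quotCompl (langReverse (M.accepts : Set (List (Fin 4)))) = 2 ^ (n - 2) + 1 := by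
  intro M
  exact ⟨S19.ideal n hn, S19.quot_L n hn, S19.quot_rev n hn⟩
end
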